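/- The cubic polynomial r(ξ) = ξ³ − 6ξ² + 5ξ − 1 has exactly the three real roots 1/(2cos(kπ/7))² for k = 1, 2, 3. -/

import Mathlib

open Real

lemma sin7 (θ : ℝ) : Real.sin (7 * θ) =
    Real.sin θ * (64 * Real.cos θ ^ 6 - 80 * Real.cos θ ^ 4 + 24 * Real.cos θ ^ 2 - 1) := by
  have h := Real.sin_sq_add_cos_sq θ
  rw [show (7:ℝ) * θ = θ + (θ + (θ + (θ + (θ + (θ + θ))))) by ring]
  simp only [Real.sin_add, Real.cos_add]
  linear_combination (- Real.sin θ ^ 5 + 22 * Real.sin θ ^ 3 * Real.cos θ ^ 2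
    - Real.sin θ ^ 3 - 57 * Real.sin θ * Real.cos θ ^ 4
    + 23 * Real.sin θ * Real.cos θ ^ 2 - Real.sin θ) * h

lemma U6_root (k : ℕ) (hk1 : 1 ≤ k) (hk3 : k ≤ 3) :
    64 * Real.cos (k * π / 7) ^ 6 - 80 * Real.cos (k * π / 7) ^ 4
      + 24 * Real.cos (k * π / 7) ^ 2 - 1 = 0 := by
  set θ := (k : ℝ) * π / 7 with hθ
  have hs : Real.sin (7 * θ) = 0 := by
    rw [hθ, show 7 * ((k:ℝ) * π / 7) = k * π by ring]
    exact Real.sin_nat_mul_pi k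
  have hθpos : 0 < θ := by
    rw [hθ]
    have : (0:ℝ) < (k:ℝ) := by exact_mod_cast hk1
    positivity
  have hθlt : θ < π := by
    rw [hθ]
    have hk : (k:ℝ) ≤ 3 := by exact_mod_cast hk3
    have : (k:ℝ) * π ≤ 3 * π := by nlinarith [Real.pi_pos]
    nlinarith [Real.pi_pos]
  have hsin : Real.sin θ ≠ 0 := ne_of_gt (Real.sin_pos_of_pos_of_lt_pi hθpos hθlt)
  have := sin7 θ
  rw [hs] at this
  rcases mul_eq_zero.mp this.symm with h | h
  · exact absurd h hsin
  · exact h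

lemma cos_pos7 (k : ℕ) (hk1 : 1 ≤ k) (hk3 : k ≤ 3) : 0 < Real.cos (k * π / 7) := by
  apply Real.cos_pos_of_mem_Ioo
  constructor
  · have : (0:ℝ) < (k:ℝ) := by exact_mod_cast hk1
    nlinarith [Real.pi_pos]
  · have hk : (k:ℝ) ≤ 3 := by exact_mod_cast hk3
    nlinarith [Real.pi_pos]

lemma root_of_cos (c : ℝ) (hc : 0 < c)
    (h : 64 * c ^ 6 - 80 * c ^ 4 + 24 * c ^ 2 - 1 = 0) :
    (1 / (2 * c) ^ 2) ^ 3 - 6 * (1 / (2 * c) ^ 2) ^ 2 + 5 * (1 / (2 * c) ^ 2) - 1 = 0 := by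
  have hc' : (2 * c) ^ 2 ≠ 0 := by positivity
  field_simp
  linear_combination (-1) * h

set_option maxHeartbeats 1000000 in
theorem cubic_roots :
    (∀ x : ℝ, x ^ 3 - 6 * x ^ 2 + 5 * x - 1 = 0 ↔
      x = 1 / (2 * Real.cos (π / 7)) ^ 2 ∨
      x = 1 / (2 * Real.cos (2 * π / 7)) ^ 2 ∨
      x = 1 / (2 * Real.cos (3 * π / 7)) ^ 2) ∧
    1 / (2 * Real.cos (π / 7)) ^ 2 ≠ 1 / (2 * Real.cos (2 * π / 7)) ^ 2 ∧
    1 / (2 * Real.cos (π / 7)) ^ 2 ≠ 1 / (2 * Real.cos (3 * π / 7)) ^ 2 ∧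
    1 / (2 * Real.cos (2 * π / 7)) ^ 2 ≠ 1 / (2 * Real.cos (3 * π / 7)) ^ 2 := by
  have e1 : π / 7 = (1:ℕ) * π / 7 := by push_cast; ring
  have e2 : 2 * π / 7 = (2:ℕ) * π / 7 := by push_cast; ring
  have e3 : 3 * π / 7 = (3:ℕ) * π / 7 := by push_cast; ring
  set c1 := Real.cos (π / 7) with hc1def
  set c2 := Real.cos (2 * π / 7) with hc2def
  set c3 := Real.cos (3 * π / 7) with hc3def
  have hc1pos : 0 < c1 := by rw [hc1def, e1]; exact cos_pos7 1 le_rfl (by norm_num)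
  have hc2pos : 0 < c2 := by rw [hc2def, e2]; exact cos_pos7 2 (by norm_num) (by norm_num)
  have hc3pos : 0 < c3 := by rw [hc3def, e3]; exact cos_pos7 3 (by norm_num) le_rfl
  have hU1 : 64 * c1 ^ 6 - 80 * c1 ^ 4 + 24 * c1 ^ 2 - 1 = 0 := by
    rw [hc1def, e1]; exact U6_root 1 le_rfl (by norm_num)
  have hU2 : 64 * c2 ^ 6 - 80 * c2 ^ 4 + 24 * c2 ^ 2 - 1 = 0 := by
    rw [hc2def, e2]; exact U6_root 2 (by norm_num) (by norm_num)
  have hU3 : 64 * c3 ^ 6 - 80 * c3 ^ 4 + 24 * c3 ^ 2 - 1 = 0 := by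
    rw [hc3def, e3]; exact U6_root 3 (by norm_num) le_rfl
  set a := 1 / (2 * c1) ^ 2 with hadef
  set b := 1 / (2 * c2) ^ 2 with hbdef
  set d := 1 / (2 * c3) ^ 2 with hddef
  have ha : a ^ 3 - 6 * a ^ 2 + 5 * a - 1 = 0 := root_of_cos c1 hc1pos hU1
  have hb : b ^ 3 - 6 * b ^ 2 + 5 * b - 1 = 0 := root_of_cos c2 hc2pos hU2
  have hd : d ^ 3 - 6 * d ^ 2 + 5 * d - 1 = 0 := root_of_cos c3 hc3pos hU3
  -- distinctness : c1 > c2 > c3 > 0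
  have h21 : c2 < c1 := by
    rw [hc1def, hc2def]
    apply Real.cos_lt_cos_of_nonneg_of_le_pi
    · positivity
    · nlinarith [Real.pi_pos]
    · nlinarith [Real.pi_pos]
  have h32 : c3 < c2 := by
    rw [hc2def, hc3def]
    apply Real.cos_lt_cos_of_nonneg_of_le_pi
    · positivity
    · nlinarith [Real.pi_pos]
    · nlinarith [Real.pi_pos]
  have hlt1 : a < b := by
    rw [hadef, hbdef]
    apply one_div_lt_one_div_of_lt (by positivity)
    nlinarith [h21, hc1pos, hc2pos]
  have hlt2 : b < d := by
    rw [hbdef, hddef]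
    apply one_div_lt_one_div_of_lt (by positivity)
    nlinarith [h32, hc2pos, hc3pos]
  have hab : a ≠ b := ne_of_lt hlt1
  have had : a ≠ d := ne_of_lt (hlt1.trans hlt2)
  have hbd : b ≠ d := ne_of_lt hlt2
  -- symmetric function identities
  have k1 : a ^ 2 + a * b + b ^ 2 - 6 * (a + b) + 5 = 0 := by
    have := sub_ne_zero.mpr hab
    have h : (a - b) * (a ^ 2 + a * b + b ^ 2 - 6 * (a + b) + 5) = 0 := by
      linear_combination ha - hb
    rcases mul_eq_zero.mp h with h' | h'
    · exact absurd h' this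
    · exact h'
  have k2 : a ^ 2 + a * d + d ^ 2 - 6 * (a + d) + 5 = 0 := by
    have := sub_ne_zero.mpr had
    have h : (a - d) * (a ^ 2 + a * d + d ^ 2 - 6 * (a + d) + 5) = 0 := by
      linear_combination ha - hd
    rcases mul_eq_zero.mp h with h' | h'
    · exact absurd h' this
    · exact h'
  have es1 : a + b + d = 6 := by
    have := sub_ne_zero.mpr hbd
    have h : (b - d) * (a + b + d - 6) = 0 := by linear_combination k1 - k2
    rcases mul_eq_zero.mp h with h' | h'
    · exact absurd h' this
    · linarith [sub_eq_zero.mp h']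
  have es2 : a * b + a * d + b * d = 5 := by nlinarith [k1, es1]
  have es3 : a * b * d = 1 := by nlinarith [ha, es1, es2]
  refine ⟨fun x => ⟨fun hx => ?_, fun hx => ?_⟩, hab, had, hbd⟩
  · have hfac : (x - a) * ((x - b) * (x - d)) = 0 := by
      linear_combination hx + x * es2 - es3 - x ^ 2 * es1
    rcases mul_eq_zero.mp hfac with h | h
    · left; linarith [sub_eq_zero.mp h]
    · rcases mul_eq_zero.mp h with h | h
      · right; left; linarith [sub_eq_zero.mp h]
      · right; right; linarith [sub_eq_zero.mp h]
  · rcases hx with h | h | h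
    · rw [h]; exact ha
    · rw [h]; exact hb
    · rw [h]; exact hd
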